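/- Let n ≥ 5 be odd and work in Sym(2n). Define t₂ = ∏_{i=1}^{⌊(n-3)/2⌋} (2+2i, 3+2i)(n+2+2i, n+3+2i), t₃ = (1,3)(2,4)(n+1,n+3)(n+2,n+4), and t₄ = (1,2)(n+1,n+2)∏_{i=1}^{n-2}(2+i, n+2+i). Then t₂t₃ has order 6 and t₃t₄ has order 4. -/

import Mathlib

open Equiv

/-- `t₁ = ∏_{i=0}^{⌊(n-2)/2⌋} (1+2i, 2+2i)(n+1+2i, n+2+2i)` in `Sym(2n)` (as a
permutation of `ℕ`). -/
def t1 (n : ℕ) : Equiv.Perm ℕ :=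
  ((List.range ((n - 2) / 2 + 1)).map
    (fun i => Equiv.swap (1 + 2*i) (2 + 2*i) * Equiv.swap (n+1+2*i) (n+2+2*i))).prod

/-- `t₂ = ∏_{i=1}^{⌊(n-3)/2⌋} (2+2i, 3+2i)(n+2+2i, n+3+2i)`. -/
def t2 (n : ℕ) : Equiv.Perm ℕ :=
  ((List.range ((n - 3) / 2)).map
    (fun j => Equiv.swap (2 + 2*(j+1)) (3 + 2*(j+1)) *
      Equiv.swap (n+2+2*(j+1)) (n+3+2*(j+1)))).prod

/-- `t₃ = (1,3)(2,4)(n+1,n+3)(n+2,n+4)`. -/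
def t3 (n : ℕ) : Equiv.Perm ℕ :=
  Equiv.swap 1 3 * Equiv.swap 2 4 * Equiv.swap (n+1) (n+3) * Equiv.swap (n+2) (n+4)

/-- `t₄ = (1,2)(n+1,n+2) ∏_{i=1}^{n-2} (2+i, n+2+i)`. -/
def t4 (n : ℕ) : Equiv.Perm ℕ :=
  Equiv.swap 1 2 * Equiv.swap (n+1) (n+2) *
    ((List.range (n - 2)).map (fun j => Equiv.swap (2 + (j+1)) (n+2+(j+1)))).prod

/- ### Auxiliary lemmas -/

lemma prod_fix (f : ℕ → Equiv.Perm ℕ) : ∀ (m : ℕ) (x : ℕ), (∀ j < m, f j x = x) →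
    ((List.range m).map f).prod x = x := by
  intro m
  induction m with
  | zero => simp
  | succ k ih =>
      intro x h
      rw [List.range_succ, List.map_append, List.prod_append]
      simp only [List.map_cons, List.map_nil, List.prod_cons, List.prod_nil, mul_one,
        Equiv.Perm.mul_apply]
      rw [h k (Nat.lt_succ_self k)]
      exact ih x (fun j hj => h j (Nat.lt_succ_of_lt hj))

lemma prod_move (f : ℕ → Equiv.Perm ℕ) (i x y : ℕ) (hxy : f i x = y)
    (hfixy : ∀ j < i, f j y = y) :
    ∀ m, i < m → (∀ j < m, j ≠ i → f j x = x) →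
    ((List.range m).map f).prod x = y := by
  intro m
  induction m with
  | zero => omega
  | succ k ih =>
      intro hi hfix
      rw [List.range_succ, List.map_append, List.prod_append]
      simp only [List.map_cons, List.map_nil, List.prod_cons, List.prod_nil, mul_one,
        Equiv.Perm.mul_apply]
      rcases Nat.lt_or_ge i k with h | h
      · rw [hfix k (Nat.lt_succ_self k) (by omega)]
        exact ih h (fun j hj hji => hfix j (Nat.lt_succ_of_lt hj) hji)
      · have : i = k := by omega
        subst this
        rw [hxy]
        exact prod_fix f i y hfixy

lemma tsfix (a b c d x : ℕ) (h1 : x ≠ a) (h2 : x ≠ b) (h3 : x ≠ c) (h4 : x ≠ d) :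
    (Equiv.swap a b * Equiv.swap c d) x = x := by
  simp [Equiv.Perm.mul_apply, Equiv.swap_apply_of_ne_of_ne, h1, h2, h3, h4]

lemma ts1 (a b c d : ℕ) (h1 : a ≠ c) (h2 : a ≠ d) :
    (Equiv.swap a b * Equiv.swap c d) a = b := by
  simp [Equiv.Perm.mul_apply, Equiv.swap_apply_of_ne_of_ne, h1, h2]

lemma ts2 (a b c d : ℕ) (h1 : b ≠ c) (h2 : b ≠ d) :
    (Equiv.swap a b * Equiv.swap c d) b = a := by
  simp [Equiv.Perm.mul_apply, Equiv.swap_apply_of_ne_of_ne, h1, h2]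

lemma ts3 (a b c d : ℕ) (h1 : d ≠ a) (h2 : d ≠ b) :
    (Equiv.swap a b * Equiv.swap c d) c = d := by
  simp [Equiv.Perm.mul_apply, Equiv.swap_apply_of_ne_of_ne, h1, h2]

lemma ts4 (a b c d : ℕ) (h1 : c ≠ a) (h2 : c ≠ b) :
    (Equiv.swap a b * Equiv.swap c d) d = c := by
  simp [Equiv.Perm.mul_apply, Equiv.swap_apply_of_ne_of_ne, h1, h2]

/- ### Evaluation of `t2` -/

lemma t2_fix {n x : ℕ} (hx : x < 4 ∨ (n < x ∧ x < n + 4) ∨ 2*n < x) : t2 n x = x := by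
  apply prod_fix
  intro j hj
  have hj2 : 2*j ≤ n - 5 := by omega
  exact tsfix _ _ _ _ _ (by omega) (by omega) (by omega) (by omega)

lemma t2_move {n j : ℕ} (hj : j < (n-3)/2) (hn : 5 ≤ n) :
    t2 n (2 + 2*(j+1)) = 3 + 2*(j+1) ∧ t2 n (3 + 2*(j+1)) = 2 + 2*(j+1) := by
  have hj2 : 2*j ≤ n - 5 := by omega
  refine ⟨prod_move _ j _ _ ?_ ?_ _ hj ?_, prod_move _ j _ _ ?_ ?_ _ hj ?_⟩
  · exact ts1 _ _ _ _ (by omega) (by omega)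
  · intro j' hj'
    exact tsfix _ _ _ _ _ (by omega) (by omega) (by omega) (by omega)
  · intro j' hj' hne
    have : 2*j' ≤ n - 5 := by omega
    exact tsfix _ _ _ _ _ (by omega) (by omega) (by omega) (by omega)
  · exact ts2 _ _ _ _ (by omega) (by omega)
  · intro j' hj'
    exact tsfix _ _ _ _ _ (by omega) (by omega) (by omega) (by omega)
  · intro j' hj' hne
    have : 2*j' ≤ n - 5 := by omega
    exact tsfix _ _ _ _ _ (by omega) (by omega) (by omega) (by omega)

lemma t2_move_hi {n j : ℕ} (hj : j < (n-3)/2) (hn : 5 ≤ n) :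
    t2 n (n+2+2*(j+1)) = n+3+2*(j+1) ∧ t2 n (n+3+2*(j+1)) = n+2+2*(j+1) := by
  have hj2 : 2*j ≤ n - 5 := by omega
  refine ⟨prod_move _ j _ _ ?_ ?_ _ hj ?_, prod_move _ j _ _ ?_ ?_ _ hj ?_⟩
  · exact ts3 _ _ _ _ (by omega) (by omega)
  · intro j' hj'
    exact tsfix _ _ _ _ _ (by omega) (by omega) (by omega) (by omega)
  · intro j' hj' hne
    have : 2*j' ≤ n - 5 := by omega
    exact tsfix _ _ _ _ _ (by omega) (by omega) (by omega) (by omega)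
  · exact ts4 _ _ _ _ (by omega) (by omega)
  · intro j' hj'
    exact tsfix _ _ _ _ _ (by omega) (by omega) (by omega) (by omega)
  · intro j' hj' hne
    have : 2*j' ≤ n - 5 := by omega
    exact tsfix _ _ _ _ _ (by omega) (by omega) (by omega) (by omega)

lemma t2_lo {n j : ℕ} (hj : j < (n-3)/2) (hn : 5 ≤ n) :
    t2 n (4+2*j) = 5+2*j ∧ t2 n (5+2*j) = 4+2*j := by
  have h := t2_move hj hn
  rw [show 2+2*(j+1) = 4+2*j by ring, show 3+2*(j+1) = 5+2*j by ring] at h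
  exact h

lemma t2_hi {n j : ℕ} (hj : j < (n-3)/2) (hn : 5 ≤ n) :
    t2 n (n+4+2*j) = n+5+2*j ∧ t2 n (n+5+2*j) = n+4+2*j := by
  have h := t2_move_hi hj hn
  rw [show n+2+2*(j+1) = n+4+2*j by ring, show n+3+2*(j+1) = n+5+2*j by ring] at h
  exact h

/- ### Evaluation of `t3` -/

section
variable {n x : ℕ}

lemma t3_fix (h1 : x ≠ 1) (h2 : x ≠ 2) (h3 : x ≠ 3) (h4 : x ≠ 4)
    (h5 : x ≠ n+1) (h6 : x ≠ n+2) (h7 : x ≠ n+3) (h8 : x ≠ n+4) : t3 n x = x := by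
  simp [t3, Equiv.Perm.mul_apply, Equiv.swap_apply_of_ne_of_ne, h1, h2, h3, h4, h5, h6, h7, h8]

variable (hn : 5 ≤ n)
include hn

lemma t3_1 : t3 n 1 = 3 := by
  have a1 : (1:ℕ) ≠ n+1 := by omega
  have a2 : (1:ℕ) ≠ n+2 := by omega
  have a3 : (1:ℕ) ≠ n+3 := by omega
  have a4 : (1:ℕ) ≠ n+4 := by omega
  simp only [t3, Equiv.Perm.mul_apply, Equiv.swap_apply_def]
  split_ifs <;> omega

lemma t3_3 : t3 n 3 = 1 := by
  have a1 : (3:ℕ) ≠ n+1 := by omega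
  have a2 : (3:ℕ) ≠ n+2 := by omega
  have a3 : (3:ℕ) ≠ n+3 := by omega
  have a4 : (3:ℕ) ≠ n+4 := by omega
  simp only [t3, Equiv.Perm.mul_apply, Equiv.swap_apply_def]
  split_ifs <;> omega

lemma t3_2 : t3 n 2 = 4 := by
  have a1 : (2:ℕ) ≠ n+1 := by omega
  have a2 : (2:ℕ) ≠ n+2 := by omega
  have a3 : (2:ℕ) ≠ n+3 := by omega
  have a4 : (2:ℕ) ≠ n+4 := by omega
  simp only [t3, Equiv.Perm.mul_apply, Equiv.swap_apply_def]
  split_ifs <;> omega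

lemma t3_4 : t3 n 4 = 2 := by
  have a1 : (4:ℕ) ≠ n+1 := by omega
  have a2 : (4:ℕ) ≠ n+2 := by omega
  have a3 : (4:ℕ) ≠ n+3 := by omega
  have a4 : (4:ℕ) ≠ n+4 := by omega
  simp only [t3, Equiv.Perm.mul_apply, Equiv.swap_apply_def]
  split_ifs <;> omega

lemma t3_n1 : t3 n (n+1) = n+3 := by
  have a1 : n+1 ≠ 1 := by omega
  have a2 : n+1 ≠ 2 := by omega
  have a3 : n+1 ≠ 3 := by omega
  have a4 : n+1 ≠ 4 := by omega
  have a5 : n+1 ≠ n+2 := by omega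
  have a6 : n+1 ≠ n+4 := by omega
  have a7 : n+3 ≠ 1 := by omega
  have a8 : n+3 ≠ 2 := by omega
  have a9 : n+3 ≠ 3 := by omega
  have a10 : n+3 ≠ 4 := by omega
  simp only [t3, Equiv.Perm.mul_apply, Equiv.swap_apply_def]
  split_ifs <;> omega

lemma t3_n3 : t3 n (n+3) = n+1 := by
  have a1 : n+1 ≠ 1 := by omega
  have a2 : n+1 ≠ 2 := by omega
  have a3 : n+1 ≠ 3 := by omega
  have a4 : n+1 ≠ 4 := by omega
  have a5 : n+3 ≠ n+2 := by omega
  have a6 : n+3 ≠ n+4 := by omega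
  simp only [t3, Equiv.Perm.mul_apply, Equiv.swap_apply_def]
  split_ifs <;> omega

lemma t3_n2 : t3 n (n+2) = n+4 := by
  have a1 : n+2 ≠ n+1 := by omega
  have a2 : n+2 ≠ n+3 := by omega
  have a3 : n+4 ≠ n+1 := by omega
  have a4 : n+4 ≠ n+3 := by omega
  have a5 : n+4 ≠ 1 := by omega
  have a6 : n+4 ≠ 2 := by omega
  have a7 : n+4 ≠ 3 := by omega
  have a8 : n+4 ≠ 4 := by omega
  simp only [t3, Equiv.Perm.mul_apply, Equiv.swap_apply_def]
  split_ifs <;> omega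

lemma t3_n4 : t3 n (n+4) = n+2 := by
  have a1 : n+2 ≠ n+1 := by omega
  have a2 : n+2 ≠ n+3 := by omega
  have a5 : n+2 ≠ 1 := by omega
  have a6 : n+2 ≠ 2 := by omega
  have a7 : n+2 ≠ 3 := by omega
  have a8 : n+2 ≠ 4 := by omega
  simp only [t3, Equiv.Perm.mul_apply, Equiv.swap_apply_def]
  split_ifs <;> omega

end

/- ### Evaluation of `t4` -/

section
variable {n x j : ℕ}

lemma q_fix (hn : 5 ≤ n) (hx : x < 3 ∨ (n < x ∧ x < n + 3) ∨ 2*n < x) :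
    ((List.range (n - 2)).map (fun j => Equiv.swap (2 + (j+1)) (n+2+(j+1)))).prod x = x := by
  apply prod_fix
  intro j hj
  exact Equiv.swap_apply_of_ne_of_ne (by omega) (by omega)

lemma q_lo (hn : 5 ≤ n) (hj : j < n - 2) :
    ((List.range (n - 2)).map (fun j => Equiv.swap (2 + (j+1)) (n+2+(j+1)))).prod (2+(j+1))
      = n+2+(j+1) := by
  refine prod_move _ j _ _ ?_ ?_ _ hj ?_
  · exact Equiv.swap_apply_left _ _
  · intro j' hj'
    exact Equiv.swap_apply_of_ne_of_ne (by omega) (by omega)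
  · intro j' hj' hne
    exact Equiv.swap_apply_of_ne_of_ne (by omega) (by omega)

lemma q_hi (hn : 5 ≤ n) (hj : j < n - 2) :
    ((List.range (n - 2)).map (fun j => Equiv.swap (2 + (j+1)) (n+2+(j+1)))).prod (n+2+(j+1))
      = 2+(j+1) := by
  refine prod_move _ j _ _ ?_ ?_ _ hj ?_
  · exact Equiv.swap_apply_right _ _
  · intro j' hj'
    exact Equiv.swap_apply_of_ne_of_ne (by omega) (by omega)
  · intro j' hj' hne
    exact Equiv.swap_apply_of_ne_of_ne (by omega) (by omega)

lemma t4_fix (hn : 5 ≤ n) (hx : x = 0 ∨ 2*n < x) : t4 n x = x := by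
  unfold t4
  simp only [Equiv.Perm.mul_apply]
  rw [q_fix hn (by omega)]
  rw [Equiv.swap_apply_of_ne_of_ne (by omega : x ≠ n+1) (by omega : x ≠ n+2),
    Equiv.swap_apply_of_ne_of_ne (by omega : x ≠ 1) (by omega : x ≠ 2)]

lemma t4_1 (hn : 5 ≤ n) : t4 n 1 = 2 := by
  unfold t4
  simp only [Equiv.Perm.mul_apply]
  rw [q_fix hn (by omega)]
  rw [Equiv.swap_apply_of_ne_of_ne (by omega : (1:ℕ) ≠ n+1) (by omega : (1:ℕ) ≠ n+2),
    Equiv.swap_apply_left]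

lemma t4_2 (hn : 5 ≤ n) : t4 n 2 = 1 := by
  unfold t4
  simp only [Equiv.Perm.mul_apply]
  rw [q_fix hn (by omega)]
  rw [Equiv.swap_apply_of_ne_of_ne (by omega : (2:ℕ) ≠ n+1) (by omega : (2:ℕ) ≠ n+2),
    Equiv.swap_apply_right]

lemma t4_n1 (hn : 5 ≤ n) : t4 n (n+1) = n+2 := by
  unfold t4
  simp only [Equiv.Perm.mul_apply]
  rw [q_fix hn (by omega)]
  rw [Equiv.swap_apply_left,
    Equiv.swap_apply_of_ne_of_ne (by omega : n+2 ≠ 1) (by omega : n+2 ≠ 2)]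

lemma t4_n2 (hn : 5 ≤ n) : t4 n (n+2) = n+1 := by
  unfold t4
  simp only [Equiv.Perm.mul_apply]
  rw [q_fix hn (by omega)]
  rw [Equiv.swap_apply_right,
    Equiv.swap_apply_of_ne_of_ne (by omega : n+1 ≠ 1) (by omega : n+1 ≠ 2)]

lemma t4_lo (hn : 5 ≤ n) (hj : j < n - 2) : t4 n (3+j) = n+3+j := by
  have h : t4 n (2+(j+1)) = n+2+(j+1) := by
    unfold t4
    simp only [Equiv.Perm.mul_apply]
    rw [q_lo hn hj]
    rw [Equiv.swap_apply_of_ne_of_ne (by omega : n+2+(j+1) ≠ n+1) (by omega : n+2+(j+1) ≠ n+2),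
      Equiv.swap_apply_of_ne_of_ne (by omega : n+2+(j+1) ≠ 1) (by omega : n+2+(j+1) ≠ 2)]
  rw [show 2+(j+1) = 3+j by ring, show n+2+(j+1) = n+3+j by ring] at h
  exact h

lemma t4_hi (hn : 5 ≤ n) (hj : j < n - 2) : t4 n (n+3+j) = 3+j := by
  have h : t4 n (n+2+(j+1)) = 2+(j+1) := by
    unfold t4
    simp only [Equiv.Perm.mul_apply]
    rw [q_hi hn hj]
    rw [Equiv.swap_apply_of_ne_of_ne (by omega : 2+(j+1) ≠ n+1) (by omega : 2+(j+1) ≠ n+2),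
      Equiv.swap_apply_of_ne_of_ne (by omega : 2+(j+1) ≠ 1) (by omega : 2+(j+1) ≠ 2)]
  rw [show 2+(j+1) = 3+j by ring, show n+2+(j+1) = n+3+j by ring] at h
  exact h

end

/- ### Power helpers -/

lemma pow6_expand {σ : Equiv.Perm ℕ} : σ^6 = σ*σ*σ*σ*σ*σ := by
  rw [show (6:ℕ) = 1+1+1+1+1+1 from rfl, pow_add, pow_add, pow_add, pow_add, pow_add, pow_one]

lemma pow4_expand {σ : Equiv.Perm ℕ} : σ^4 = σ*σ*σ*σ := by
  rw [show (4:ℕ) = 1+1+1+1 from rfl, pow_add, pow_add, pow_add, pow_one]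

lemma pow6_fix {σ : Equiv.Perm ℕ} {a : ℕ} (h : σ a = a) : (σ^6) a = a := by
  rw [pow6_expand]; simp [Equiv.Perm.mul_apply, h]

lemma pow6_two {σ : Equiv.Perm ℕ} {a b : ℕ} (h1 : σ a = b) (h2 : σ b = a) : (σ^6) a = a := by
  rw [pow6_expand]; simp [Equiv.Perm.mul_apply, h1, h2]

lemma pow6_three {σ : Equiv.Perm ℕ} {a b c : ℕ} (h1 : σ a = b) (h2 : σ b = c) (h3 : σ c = a) :
    (σ^6) a = a := by
  rw [pow6_expand]; simp [Equiv.Perm.mul_apply, h1, h2, h3]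

lemma pow4_fix {σ : Equiv.Perm ℕ} {a : ℕ} (h : σ a = a) : (σ^4) a = a := by
  rw [pow4_expand]; simp [Equiv.Perm.mul_apply, h]

lemma pow4_two {σ : Equiv.Perm ℕ} {a b : ℕ} (h1 : σ a = b) (h2 : σ b = a) : (σ^4) a = a := by
  rw [pow4_expand]; simp [Equiv.Perm.mul_apply, h1, h2]

lemma pow4_four {σ : Equiv.Perm ℕ} {a b c d : ℕ} (h1 : σ a = b) (h2 : σ b = c) (h3 : σ c = d)
    (h4 : σ d = a) : (σ^4) a = a := by
  rw [pow4_expand]; simp [Equiv.Perm.mul_apply, h1, h2, h3, h4]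

lemma fin7 : ∀ d : Fin 7, d.val ∣ 6 →
    d.val = 0 ∨ d.val = 1 ∨ d.val = 2 ∨ d.val = 3 ∨ d.val = 6 := by decide

lemma fin5 : ∀ d : Fin 5, d.val ∣ 4 →
    d.val = 0 ∨ d.val = 1 ∨ d.val = 2 ∨ d.val = 4 := by decide

/-- For odd `n ≥ 5`, `t₂t₃` has order `6` and `t₃t₄` has order `4`. -/
theorem orderOf_t2t3_and_t3t4 (n : ℕ) (hn : 5 ≤ n) (hodd : Odd n) :
    orderOf (t2 n * t3 n) = 6 ∧ orderOf (t3 n * t4 n) = 4 := by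
  obtain ⟨k, hk⟩ := hodd
  -- facts about σ = t2 * t3
  have s0 : ∀ x : ℕ, x = 0 ∨ 2*n < x → (t2 n * t3 n) x = x := by
    intro x hx
    rw [Equiv.Perm.mul_apply,
      t3_fix (by omega) (by omega) (by omega) (by omega) (by omega) (by omega) (by omega)
        (by omega), t2_fix (by omega)]
  have s1 : (t2 n * t3 n) 1 = 3 := by
    rw [Equiv.Perm.mul_apply, t3_1 hn, t2_fix (by omega)]
  have s3 : (t2 n * t3 n) 3 = 1 := by
    rw [Equiv.Perm.mul_apply, t3_3 hn, t2_fix (by omega)]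
  have s2 : (t2 n * t3 n) 2 = 5 := by
    rw [Equiv.Perm.mul_apply, t3_2 hn]
    have h := (t2_lo (n := n) (j := 0) (by omega) hn).1
    norm_num at h
    exact h
  have s5 : (t2 n * t3 n) 5 = 4 := by
    rw [Equiv.Perm.mul_apply,
      t3_fix (by omega) (by omega) (by omega) (by omega) (by omega) (by omega) (by omega)
        (by omega)]
    have h := (t2_lo (n := n) (j := 0) (by omega) hn).2
    norm_num at h
    exact h
  have s4 : (t2 n * t3 n) 4 = 2 := by
    rw [Equiv.Perm.mul_apply, t3_4 hn, t2_fix (by omega)]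
  have slo : ∀ j : ℕ, 1 ≤ j → j < (n-3)/2 →
      (t2 n * t3 n) (4+2*j) = 5+2*j ∧ (t2 n * t3 n) (5+2*j) = 4+2*j := by
    intro j hj1 hj2
    have hb : 2*j ≤ n - 5 := by omega
    constructor
    · rw [Equiv.Perm.mul_apply,
        t3_fix (by omega) (by omega) (by omega) (by omega) (by omega) (by omega) (by omega)
          (by omega)]
      exact (t2_lo hj2 hn).1
    · rw [Equiv.Perm.mul_apply,
        t3_fix (by omega) (by omega) (by omega) (by omega) (by omega) (by omega) (by omega)
          (by omega)]
      exact (t2_lo hj2 hn).2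
  have sn1 : (t2 n * t3 n) (n+1) = n+3 := by
    rw [Equiv.Perm.mul_apply, t3_n1 hn, t2_fix (by omega)]
  have sn3 : (t2 n * t3 n) (n+3) = n+1 := by
    rw [Equiv.Perm.mul_apply, t3_n3 hn, t2_fix (by omega)]
  have sn2 : (t2 n * t3 n) (n+2) = n+5 := by
    rw [Equiv.Perm.mul_apply, t3_n2 hn]
    have h := (t2_hi (n := n) (j := 0) (by omega) hn).1
    norm_num at h
    exact h
  have sn5 : (t2 n * t3 n) (n+5) = n+4 := by
    rw [Equiv.Perm.mul_apply,
      t3_fix (by omega) (by omega) (by omega) (by omega) (by omega) (by omega) (by omega)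
        (by omega)]
    have h := (t2_hi (n := n) (j := 0) (by omega) hn).2
    norm_num at h
    exact h
  have sn4 : (t2 n * t3 n) (n+4) = n+2 := by
    rw [Equiv.Perm.mul_apply, t3_n4 hn, t2_fix (by omega)]
  have shi : ∀ j : ℕ, 1 ≤ j → j < (n-3)/2 →
      (t2 n * t3 n) (n+4+2*j) = n+5+2*j ∧ (t2 n * t3 n) (n+5+2*j) = n+4+2*j := by
    intro j hj1 hj2
    have hb : 2*j ≤ n - 5 := by omega
    constructor
    · rw [Equiv.Perm.mul_apply,
        t3_fix (by omega) (by omega) (by omega) (by omega) (by omega) (by omega) (by omega)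
          (by omega)]
      exact (t2_hi hj2 hn).1
    · rw [Equiv.Perm.mul_apply,
        t3_fix (by omega) (by omega) (by omega) (by omega) (by omega) (by omega) (by omega)
          (by omega)]
      exact (t2_hi hj2 hn).2
  have h6 : (t2 n * t3 n) ^ 6 = 1 := by
    ext x
    simp only [Equiv.Perm.one_apply]
    show ((t2 n * t3 n) ^ 6) x = x
    have hc : x = 0 ∨ 2*n < x ∨ x = 1 ∨ x = 2 ∨ x = 3 ∨ x = 4 ∨ x = 5 ∨ (6 ≤ x ∧ x ≤ n) ∨
        x = n+1 ∨ x = n+2 ∨ x = n+3 ∨ x = n+4 ∨ x = n+5 ∨ (n+6 ≤ x ∧ x ≤ 2*n) := by omega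
    rcases hc with h | h | rfl | rfl | rfl | rfl | rfl | h | rfl | rfl | rfl | rfl | rfl | h
    · exact pow6_fix (s0 x (Or.inl h))
    · exact pow6_fix (s0 x (Or.inr h))
    · exact pow6_two s1 s3
    · exact pow6_three s2 s5 s4
    · exact pow6_two s3 s1
    · exact pow6_three s4 s2 s5
    · exact pow6_three s5 s4 s2
    · obtain ⟨j, hj1, hj2, hxe⟩ : ∃ j, 1 ≤ j ∧ j < (n-3)/2 ∧ (x = 4+2*j ∨ x = 5+2*j) :=
        ⟨(x-4)/2, by omega, by omega, by omega⟩
      rcases hxe with rfl | rfl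
      · exact pow6_two (slo j hj1 hj2).1 (slo j hj1 hj2).2
      · exact pow6_two (slo j hj1 hj2).2 (slo j hj1 hj2).1
    · exact pow6_two sn1 sn3
    · exact pow6_three sn2 sn5 sn4
    · exact pow6_two sn3 sn1
    · exact pow6_three sn4 sn2 sn5
    · exact pow6_three sn5 sn4 sn2
    · obtain ⟨j, hj1, hj2, hxe⟩ : ∃ j, 1 ≤ j ∧ j < (n-3)/2 ∧ (x = n+4+2*j ∨ x = n+5+2*j) :=
        ⟨(x-n-4)/2, by omega, by omega, by omega⟩
      rcases hxe with rfl | rfl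
      · exact pow6_two (shi j hj1 hj2).1 (shi j hj1 hj2).2
      · exact pow6_two (shi j hj1 hj2).2 (shi j hj1 hj2).1
  -- facts about τ = t3 * t4
  have u0 : ∀ x : ℕ, x = 0 ∨ 2*n < x → (t3 n * t4 n) x = x := by
    intro x hx
    rw [Equiv.Perm.mul_apply, t4_fix hn hx,
      t3_fix (by omega) (by omega) (by omega) (by omega) (by omega) (by omega) (by omega)
        (by omega)]
  have u1 : (t3 n * t4 n) 1 = 4 := by
    rw [Equiv.Perm.mul_apply, t4_1 hn, t3_2 hn]
  have u4 : (t3 n * t4 n) 4 = n+2 := by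
    rw [Equiv.Perm.mul_apply]
    have h := t4_lo (n := n) (j := 1) hn (by omega)
    norm_num at h
    rw [h, t3_n4 hn]
  have un2 : (t3 n * t4 n) (n+2) = n+3 := by
    rw [Equiv.Perm.mul_apply, t4_n2 hn, t3_n1 hn]
  have un3 : (t3 n * t4 n) (n+3) = 1 := by
    rw [Equiv.Perm.mul_apply]
    have h := t4_hi (n := n) (j := 0) hn (by omega)
    norm_num at h
    rw [h, t3_3 hn]
  have u2 : (t3 n * t4 n) 2 = 3 := by
    rw [Equiv.Perm.mul_apply, t4_2 hn, t3_1 hn]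
  have u3 : (t3 n * t4 n) 3 = n+1 := by
    rw [Equiv.Perm.mul_apply]
    have h := t4_lo (n := n) (j := 0) hn (by omega)
    norm_num at h
    rw [h, t3_n3 hn]
  have un1 : (t3 n * t4 n) (n+1) = n+4 := by
    rw [Equiv.Perm.mul_apply, t4_n1 hn, t3_n2 hn]
  have un4 : (t3 n * t4 n) (n+4) = 2 := by
    rw [Equiv.Perm.mul_apply]
    have h := t4_hi (n := n) (j := 1) hn (by omega)
    norm_num at h
    rw [h, t3_4 hn]
  have ulo : ∀ j : ℕ, 2 ≤ j → j < n - 2 →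
      (t3 n * t4 n) (3+j) = n+3+j ∧ (t3 n * t4 n) (n+3+j) = 3+j := by
    intro j hj1 hj2
    constructor
    · rw [Equiv.Perm.mul_apply, t4_lo hn hj2,
        t3_fix (by omega) (by omega) (by omega) (by omega) (by omega) (by omega) (by omega)
          (by omega)]
    · rw [Equiv.Perm.mul_apply, t4_hi hn hj2,
        t3_fix (by omega) (by omega) (by omega) (by omega) (by omega) (by omega) (by omega)
          (by omega)]
  have h4 : (t3 n * t4 n) ^ 4 = 1 := by
    ext x
    simp only [Equiv.Perm.one_apply]
    show ((t3 n * t4 n) ^ 4) x = x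
    have hc : x = 0 ∨ 2*n < x ∨ x = 1 ∨ x = 2 ∨ x = 3 ∨ x = 4 ∨ (5 ≤ x ∧ x ≤ n) ∨
        x = n+1 ∨ x = n+2 ∨ x = n+3 ∨ x = n+4 ∨ (n+5 ≤ x ∧ x ≤ 2*n) := by omega
    rcases hc with h | h | rfl | rfl | rfl | rfl | h | rfl | rfl | rfl | rfl | h
    · exact pow4_fix (u0 x (Or.inl h))
    · exact pow4_fix (u0 x (Or.inr h))
    · exact pow4_four u1 u4 un2 un3
    · exact pow4_four u2 u3 un1 un4
    · exact pow4_four u3 un1 un4 u2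
    · exact pow4_four u4 un2 un3 u1
    · obtain ⟨j, hj1, hj2, rfl⟩ : ∃ j, 2 ≤ j ∧ j < n - 2 ∧ x = 3+j :=
        ⟨x-3, by omega, by omega, by omega⟩
      exact pow4_two (ulo j hj1 hj2).1 (ulo j hj1 hj2).2
    · exact pow4_four un1 un4 u2 u3
    · exact pow4_four un2 un3 u1 u4
    · exact pow4_four un3 u1 u4 un2
    · exact pow4_four un4 u2 u3 un1
    · obtain ⟨j, hj1, hj2, rfl⟩ : ∃ j, 2 ≤ j ∧ j < n - 2 ∧ x = n+3+j :=
        ⟨x-n-3, by omega, by omega, by omega⟩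
      exact pow4_two (ulo j hj1 hj2).2 (ulo j hj1 hj2).1
  constructor
  · -- order of t2 * t3
    have hdvd : orderOf (t2 n * t3 n) ∣ 6 := orderOf_dvd_of_pow_eq_one h6
    have hv2 : ((t2 n * t3 n) ^ 2) 2 = 4 := by
      rw [show (2:ℕ) = 1+1 from rfl, pow_add, pow_one, Equiv.Perm.mul_apply, s2, s5]
    have hv3 : ((t2 n * t3 n) ^ 3) 1 = 3 := by
      rw [show (3:ℕ) = 1+1+1 from rfl, pow_add, pow_add, pow_one, Equiv.Perm.mul_apply,
        Equiv.Perm.mul_apply, s1, s3, s1]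
    have hne1 : orderOf (t2 n * t3 n) ≠ 1 := by
      intro h
      have h' := orderOf_eq_one_iff.mp h
      rw [h'] at s2
      simp at s2
    have hne2 : orderOf (t2 n * t3 n) ≠ 2 := by
      intro h
      have h' : (t2 n * t3 n) ^ 2 = 1 := h ▸ pow_orderOf_eq_one (t2 n * t3 n)
      rw [h'] at hv2
      simp at hv2
    have hne3 : orderOf (t2 n * t3 n) ≠ 3 := by
      intro h
      have h' : (t2 n * t3 n) ^ 3 = 1 := h ▸ pow_orderOf_eq_one (t2 n * t3 n)
      rw [h'] at hv3
      simp at hv3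
    have hne0 : orderOf (t2 n * t3 n) ≠ 0 := by
      intro h
      rw [h, zero_dvd_iff] at hdvd
      exact absurd hdvd (by norm_num)
    have hlt : orderOf (t2 n * t3 n) < 7 := by
      have := Nat.le_of_dvd (by norm_num) hdvd
      omega
    have hd : orderOf (t2 n * t3 n) = 0 ∨ orderOf (t2 n * t3 n) = 1 ∨
        orderOf (t2 n * t3 n) = 2 ∨ orderOf (t2 n * t3 n) = 3 ∨ orderOf (t2 n * t3 n) = 6 :=
      fin7 ⟨orderOf (t2 n * t3 n), hlt⟩ hdvd
    omega
  · -- order of t3 * t4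
    have hdvd : orderOf (t3 n * t4 n) ∣ 4 := orderOf_dvd_of_pow_eq_one h4
    have hv2 : ((t3 n * t4 n) ^ 2) 1 = n+2 := by
      rw [show (2:ℕ) = 1+1 from rfl, pow_add, pow_one, Equiv.Perm.mul_apply, u1, u4]
    have hne1 : orderOf (t3 n * t4 n) ≠ 1 := by
      intro h
      have h' := orderOf_eq_one_iff.mp h
      rw [h'] at u1
      simp at u1
    have hne2 : orderOf (t3 n * t4 n) ≠ 2 := by
      intro h
      have h' : (t3 n * t4 n) ^ 2 = 1 := h ▸ pow_orderOf_eq_one (t3 n * t4 n)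
      rw [h'] at hv2
      simp only [Equiv.Perm.one_apply] at hv2
      omega
    have hne0 : orderOf (t3 n * t4 n) ≠ 0 := by
      intro h
      rw [h, zero_dvd_iff] at hdvd
      exact absurd hdvd (by norm_num)
    have hlt : orderOf (t3 n * t4 n) < 5 := by
      have := Nat.le_of_dvd (by norm_num) hdvd
      omega
    have hd : orderOf (t3 n * t4 n) = 0 ∨ orderOf (t3 n * t4 n) = 1 ∨
        orderOf (t3 n * t4 n) = 2 ∨ orderOf (t3 n * t4 n) = 4 :=
      fin5 ⟨orderOf (t3 n * t4 n), hlt⟩ hdvd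
    omega
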